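/- arXiv:2110.07362 — 7 statements merged into one kernel-verified Lean document; each statement's English description precedes it below -/
import Mathlib

section
/- Let ζ₁,…,ζ_N be positive reals with ∑ᵢ ζᵢ = 1, and let Z = diag(ζ₁ I, …, ζ_N I) ∈ ℝ^{N·n × N·n}, 𝟙 ∈ ℝ^{N·n × n} the block column of N identity matrices, and M = diag(M_s, …, M_s) with M_s ∈ ℝ^{n×n} symmetric positive definite. Then for any γ ≥ 0, the matrix M_γ := M((1+γ)Z − γ Z 𝟙 𝟙ᵀ Z) is symmetric and positive definite. -/
open Matrix

open Kronecker in
lemma kron_posDef {N n : ℕ} {A : Matrix (Fin N) (Fin N) ℝ} {B : Matrix (Fin n) (Fin n) ℝ}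
    (hA : A.PosDef) (hB : B.PosDef) : (A ⊗ₖ B).PosDef := by
  have hsd : (A ⊗ₖ B).PosSemidef := by
    exact hA.posSemidef.kronecker hB.posSemidef
  have hdet : IsUnit (A ⊗ₖ B) := by
    rw [Matrix.isUnit_iff_isUnit_det, det_kronecker]
    exact (mul_pos (pow_pos hA.det_pos _) (pow_pos hB.det_pos _)).ne'.isUnit
  refine PosDef.of_dotProduct_mulVec_pos hsd.isHermitian fun x hx => ?_
  rcases lt_or_eq_of_le (hsd.dotProduct_mulVec_nonneg x) with h | h
  · exact h
  · exfalso
    have h0 : (A ⊗ₖ B) *ᵥ x = 0 := (hsd.dotProduct_mulVec_zero_iff x).mp h.symm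
    exact hx (Matrix.mulVec_injective_iff_isUnit.mpr hdet (by simpa using h0 : (A ⊗ₖ B) *ᵥ x = (A ⊗ₖ B) *ᵥ 0))

/-- The matrix `M_γ = M((1+γ)Z − γ Z 𝟙 𝟙ᵀ Z)` is symmetric positive definite. -/
theorem Mgamma_posDef {N n : ℕ} (ζ : Fin N → ℝ) (hζ : ∀ i, 0 < ζ i)
    (hsum : ∑ i, ζ i = 1)
    (Ms : Matrix (Fin n) (Fin n) ℝ) (hMs : Ms.PosDef) (γ : ℝ) (hγ : 0 ≤ γ) :
    let Z : Matrix (Fin N × Fin n) (Fin N × Fin n) ℝ := Matrix.diagonal fun p => ζ p.1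
    let M : Matrix (Fin N × Fin n) (Fin N × Fin n) ℝ :=
      Matrix.of fun p q => if p.1 = q.1 then Ms p.2 q.2 else 0
    let E : Matrix (Fin N × Fin n) (Fin n) ℝ :=
      Matrix.of fun p b => if p.2 = b then (1 : ℝ) else 0
    (M * ((1 + γ) • Z - γ • (Z * (E * Eᵀ) * Z))).PosDef := by
  intro Z M E
  set S : Matrix (Fin N) (Fin N) ℝ :=
    Matrix.of fun i j => (1 + γ) * (if i = j then ζ i else 0) - γ * (ζ i * ζ j) with hS
  have hSposd : S.PosDef := by
    refine PosDef.of_dotProduct_mulVec_pos ?_ ?_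
    · ext i j
      simp only [hS, conjTranspose_apply, of_apply, star_trivial]
      by_cases h : i = j
      · subst h; ring
      · rw [if_neg h, if_neg (Ne.symm h)]; ring
    · intro x hx
      have h1 : ∀ i : Fin N, (∑ j, (if i = j then ζ i else 0) * (x i * x j))
          = ζ i * (x i * x i) := by
        intro i; simp [ite_mul]
      have key : star x ⬝ᵥ S *ᵥ x =
          (1 + γ) * (∑ i, ζ i * x i ^ 2) - γ * (∑ i, ζ i * x i) ^ 2 := by
        calc star x ⬝ᵥ S *ᵥ x
            = ∑ i, ∑ j, ((1 + γ) * ((if i = j then ζ i else 0) * (x i * x j))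
                - γ * ((ζ i * x i) * (ζ j * x j))) := by
              simp only [dotProduct, mulVec, dotProduct, of_apply, star_trivial, hS,
                Finset.mul_sum]
              exact Finset.sum_congr rfl fun i _ => Finset.sum_congr rfl fun j _ => by ring
          _ = ∑ i, ((1 + γ) * (ζ i * x i ^ 2)
                - γ * ((ζ i * x i) * ∑ j, ζ j * x j)) := by
              refine Finset.sum_congr rfl fun i _ => ?_
              rw [Finset.sum_sub_distrib, ← Finset.mul_sum, h1 i, ← Finset.mul_sum,
                ← Finset.mul_sum]
              ring
          _ = (1 + γ) * (∑ i, ζ i * x i ^ 2) - γ * (∑ i, ζ i * x i) ^ 2 := by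
              rw [Finset.sum_sub_distrib, ← Finset.mul_sum, ← Finset.mul_sum,
                ← Finset.sum_mul, sq]
      rw [key]
      set T := ∑ i, ζ i * x i ^ 2 with hT
      have hTpos : 0 < T := by
        obtain ⟨i, hi⟩ := Function.ne_iff.mp hx
        refine Finset.sum_pos' (fun j _ => mul_nonneg (hζ j).le (sq_nonneg _))
          ⟨i, Finset.mem_univ i, mul_pos (hζ i) (lt_of_le_of_ne (sq_nonneg _) (Ne.symm (pow_ne_zero 2 hi)))⟩
      have hCS : (∑ i, ζ i * x i) ^ 2 ≤ T := by
        have := Finset.sum_sq_le_sum_mul_sum_of_sq_eq_mul Finset.univ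
          (r := fun i => ζ i * x i) (f := ζ) (g := fun i => ζ i * x i ^ 2)
          (fun i _ => (hζ i).le) (fun i _ => mul_nonneg (hζ i).le (sq_nonneg _))
          (fun i _ => by ring)
        rwa [hsum, one_mul] at this
      nlinarith
  have hEE : E * Eᵀ = Matrix.of fun p q => if p.2 = q.2 then (1 : ℝ) else 0 := by
    ext p q
    simp only [mul_apply, transpose_apply, E, of_apply]
    simp [ite_and]
  have hZEZ : Z * (E * Eᵀ) * Z = Matrix.of fun p q => if p.2 = q.2 then ζ p.1 * ζ q.1 else 0 := by
    rw [hEE]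
    ext p q
    simp only [Z, diagonal_mul, mul_diagonal, of_apply]
    by_cases h : p.2 = q.2 <;> simp [h]
  have heq : M * ((1 + γ) • Z - γ • (Z * (E * Eᵀ) * Z)) = Matrix.kroneckerMap (· * ·) S Ms := by
    rw [hZEZ]
    ext ⟨i, a⟩ ⟨j, b⟩
    simp only [mul_apply, Matrix.sub_apply, Matrix.smul_apply, M, Z, of_apply, diagonal_apply,
      kroneckerMap_apply, hS, smul_eq_mul, Fintype.sum_prod_type, Prod.mk.injEq, ite_and,
      mul_ite, mul_zero, ite_mul, zero_mul, mul_sub, Finset.sum_sub_distrib,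
      Finset.sum_ite_eq, Finset.sum_ite_eq', Finset.mem_univ, if_true]
    by_cases h : i = j <;> simp [h] <;> ring
  rw [heq]
  exact kron_posDef hSposd hMs
end

section
/- With the notation above (ζᵢ > 0, ∑ᵢ ζᵢ = 1, Z = diag(ζᵢ I), 𝟙 the block column of identities, M = diag(M_s,…,M_s) with M_s symmetric positive definite, γ ≥ 0), the inverse of M_γ = M((1+γ)Z − γ Z 𝟙 𝟙ᵀ Z) is given by M_γ⁻¹ = ((1/(1+γ)) Z⁻¹ + (γ/(1+γ)) 𝟙 𝟙ᵀ) M⁻¹. -/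
open Matrix

/-- Explicit formula for the inverse of `M_γ`. -/
theorem Mgamma_inv {N n : ℕ} (ζ : Fin N → ℝ) (hζ : ∀ i, 0 < ζ i)
    (hsum : ∑ i, ζ i = 1)
    (Ms : Matrix (Fin n) (Fin n) ℝ) (hMs : Ms.PosDef) (γ : ℝ) (hγ : 0 ≤ γ) :
    let Z : Matrix (Fin N × Fin n) (Fin N × Fin n) ℝ := Matrix.diagonal fun p => ζ p.1
    let M : Matrix (Fin N × Fin n) (Fin N × Fin n) ℝ :=
      Matrix.of fun p q => if p.1 = q.1 then Ms p.2 q.2 else 0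
    let E : Matrix (Fin N × Fin n) (Fin n) ℝ :=
      Matrix.of fun p b => if p.2 = b then (1 : ℝ) else 0
    (M * ((1 + γ) • Z - γ • (Z * (E * Eᵀ) * Z)))⁻¹ =
      ((1 / (1 + γ)) • Z⁻¹ + (γ / (1 + γ)) • (E * Eᵀ)) * M⁻¹ := by
  intro Z M E
  have hγ1 : (1 : ℝ) + γ ≠ 0 := by positivity
  -- Z is invertible
  have hZdet : IsUnit Z.det := by
    rw [show Z.det = ∏ p : Fin N × Fin n, ζ p.1 from Matrix.det_diagonal]
    exact (Finset.prod_pos (fun p _ => hζ p.1)).ne'.isUnit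
  have hZinv : Z * Z⁻¹ = 1 := Matrix.mul_nonsing_inv Z hZdet
  -- EᵀZE = 1
  have hEZE : Eᵀ * Z * E = 1 := by
    ext b b'
    simp only [Matrix.mul_apply, Matrix.transpose_apply, Matrix.of_apply, Z, E,
      Matrix.diagonal_apply, Fintype.sum_prod_type, Matrix.one_apply]
    by_cases h : b = b'
    · subst h
      simp [Prod.ext_iff, ite_and, Finset.sum_ite_eq, Finset.sum_ite_eq', hsum]
    · simp [Prod.ext_iff, ite_and, Finset.sum_ite_eq, Finset.sum_ite_eq', h, Ne.symm h]
  -- M is invertible (right inverse: block diagonal of Ms⁻¹)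
  have hMsdet : IsUnit Ms.det := hMs.det_pos.ne'.isUnit
  have hMsinv : Ms * Ms⁻¹ = 1 := Matrix.mul_nonsing_inv Ms hMsdet
  have hMright : M * (Matrix.of fun p q => if p.1 = q.1 then Ms⁻¹ p.2 q.2 else 0) = 1 := by
    ext ⟨i, a⟩ ⟨j, b⟩
    have h1 := congrFun (congrFun hMsinv a) b
    simp only [Matrix.mul_apply, Matrix.one_apply] at h1 ⊢
    simp only [M, Matrix.of_apply, Fintype.sum_prod_type, ite_mul, zero_mul, mul_ite, mul_zero]
    by_cases h : i = j
    · subst h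
      simp [Finset.sum_ite_eq, Finset.sum_ite_eq', h1, Prod.ext_iff]
    · simp [Finset.sum_ite_eq, Finset.sum_ite_eq', h, Ne.symm h, Prod.ext_iff]
  have hMunit : IsUnit M.det := by
    have : Invertible M := invertibleOfRightInverse _ _ hMright
    exact Matrix.isUnit_det_of_invertible M
  have hMinv : M * M⁻¹ = 1 := Matrix.mul_nonsing_inv M hMunit
  -- key algebraic identities
  have hJZJ : Z * (E * Eᵀ) * Z * (E * Eᵀ) = Z * (E * Eᵀ) := by
    calc Z * (E * Eᵀ) * Z * (E * Eᵀ) = Z * E * (Eᵀ * Z * E) * Eᵀ := by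
          simp only [Matrix.mul_assoc]
      _ = Z * (E * Eᵀ) := by rw [hEZE, Matrix.mul_one, Matrix.mul_assoc]
  have hZJZ : Z * (E * Eᵀ) * Z * Z⁻¹ = Z * (E * Eᵀ) := by
    rw [Matrix.mul_assoc, hZinv, Matrix.mul_one]
  have key : ((1 + γ) • Z - γ • (Z * (E * Eᵀ) * Z)) *
      ((1 / (1 + γ)) • Z⁻¹ + (γ / (1 + γ)) • (E * Eᵀ)) = 1 := by
    simp only [Matrix.sub_mul, Matrix.mul_add, Matrix.smul_mul, Matrix.mul_smul, smul_smul]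
    rw [hZinv, hZJZ, hJZJ]
    match_scalars <;> field_simp <;> ring
  refine Matrix.inv_eq_right_inv ?_
  rw [Matrix.mul_assoc M _ _, ← Matrix.mul_assoc ((1 + γ) • Z - γ • (Z * (E * Eᵀ) * Z)) _ M⁻¹,
    key, Matrix.one_mul, hMinv]
end

section
/- The matrix M((1+γ)Z − γ Z 𝟙 𝟙ᵀ Z) admits the decomposition M Z + γ (I − 𝟙 𝟙ᵀ Z)ᵀ M Z (I − 𝟙 𝟙ᵀ Z), where the weights ζᵢ are positive and sum to one. -/
open Matrix

set_option maxHeartbeats 1000000 in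
/-- Decomposition `M_γ = M Z + γ (I − 𝟙𝟙ᵀZ)ᵀ M Z (I − 𝟙𝟙ᵀZ)`. -/
theorem Mgamma_decomposition {N n : ℕ} (ζ : Fin N → ℝ) (hζ : ∀ i, 0 < ζ i)
    (hsum : ∑ i, ζ i = 1)
    (Ms : Matrix (Fin n) (Fin n) ℝ) (hMs : Ms.PosDef) (γ : ℝ) :
    let Z : Matrix (Fin N × Fin n) (Fin N × Fin n) ℝ := Matrix.diagonal fun p => ζ p.1
    let M : Matrix (Fin N × Fin n) (Fin N × Fin n) ℝ :=
      Matrix.of fun p q => if p.1 = q.1 then Ms p.2 q.2 else 0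
    let E : Matrix (Fin N × Fin n) (Fin n) ℝ :=
      Matrix.of fun p b => if p.2 = b then (1 : ℝ) else 0
    M * ((1 + γ) • Z - γ • (Z * (E * Eᵀ) * Z)) =
      M * Z + γ • ((1 - E * Eᵀ * Z)ᵀ * (M * Z) * (1 - E * Eᵀ * Z)) := by
  intro Z M E
  have hZt : Zᵀ = Z := Matrix.diagonal_transpose _
  have hEMZ : Eᵀ * (M * Z) = Ms * (Eᵀ * Z) := by
    ext b q
    simp [Matrix.mul_apply, Matrix.mul_diagonal, E, M, Z, Fintype.sum_prod_type,
      Matrix.diagonal_apply, Prod.mk.injEq, ite_and,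
      ite_mul, mul_ite, Finset.sum_ite_eq, Finset.sum_ite_eq']
  have hEZE : Eᵀ * Z * E = 1 := by
    ext b c
    simp only [Matrix.mul_apply, Matrix.mul_diagonal, Matrix.transpose_apply, E, Z,
      Matrix.of_apply, Fintype.sum_prod_type, ite_mul, mul_ite, one_mul, mul_one, zero_mul,
      mul_zero, Finset.sum_ite_eq, Finset.sum_ite_eq', Finset.mem_univ, if_true]
    by_cases h : b = c <;>
      simp [h, hsum, Matrix.one_apply, eq_comm, Matrix.diagonal_apply, Prod.mk.injEq]
  have key : (E * Eᵀ) * (M * Z) * (E * Eᵀ * Z) = (E * Eᵀ) * (M * Z) := by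
    calc (E * Eᵀ) * (M * Z) * (E * Eᵀ * Z)
        = E * (Ms * ((Eᵀ * Z * E) * (Eᵀ * Z))) := by
          rw [Matrix.mul_assoc E Eᵀ (M * Z), hEMZ]
          simp only [Matrix.mul_assoc]
      _ = E * (Eᵀ * (M * Z)) := by rw [hEZE, Matrix.one_mul, hEMZ]
      _ = (E * Eᵀ) * (M * Z) := by rw [Matrix.mul_assoc]
  have hPt : (E * Eᵀ * Z)ᵀ = Z * (E * Eᵀ) := by
    rw [Matrix.transpose_mul, hZt, Matrix.transpose_mul, Matrix.transpose_transpose]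
  rw [Matrix.transpose_sub, Matrix.transpose_one, hPt]
  have expand : (1 - Z * (E * Eᵀ)) * (M * Z) * (1 - E * Eᵀ * Z)
      = M * Z - M * Z * (E * Eᵀ * Z) := by
    rw [sub_mul, one_mul, sub_mul, mul_sub, mul_sub, mul_one, mul_one]
    rw [Matrix.mul_assoc Z (E * Eᵀ) (M * Z), Matrix.mul_assoc Z ((E * Eᵀ) * (M * Z)) _, key]
    abel
  rw [expand]
  clear_value Z M E
  clear hζ hMs hsum hZt hEMZ hEZE key hPt expand
  rw [mul_sub, Matrix.mul_smul, Matrix.mul_smul, smul_sub, add_smul, one_smul]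
  simp only [← Matrix.mul_assoc]
  abel
end

section
/- Let M_s, A₀ ∈ ℝ^{n×n} be symmetric positive definite, let Aᵢ, i = 1,…,N, be symmetric positive definite with A₀ = ∑ᵢ ζᵢ Aᵢ for positive weights ζᵢ summing to one, and β > 0. Define L = I + (1/√β) M_s ∑ᵢ ζᵢ Aᵢ⁻¹ and P₀ = I + (1/√β) M_s A₀⁻¹. Then all eigenvalues of P₀⁻¹ L are real and greater than or equal to 1. -/
open Matrix

section Aux

/-- Complex quadratic form of a mapped real symmetric matrix. -/
private lemma quad_map_eq {n : ℕ} (M : Matrix (Fin n) (Fin n) ℝ) (hM : Mᵀ = M) (v : Fin n → ℂ) :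
    star v ⬝ᵥ ((M.map (algebraMap ℝ ℂ)) *ᵥ v)
      = (((fun i => (v i).re) ⬝ᵥ (M *ᵥ fun i => (v i).re)
          + (fun i => (v i).im) ⬝ᵥ (M *ᵥ fun i => (v i).im) : ℝ) : ℂ) := by
  have hsym : ∀ (a b : Fin n → ℝ), a ⬝ᵥ (M *ᵥ b) = b ⬝ᵥ (M *ᵥ a) := by
    intro a b
    rw [dotProduct_mulVec, ← mulVec_transpose, hM, dotProduct_comm]
  apply Complex.ext
  · simp [dotProduct, mulVec, Complex.mul_re, Finset.mul_sum, Finset.sum_add_distrib,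
      Complex.re_sum, Finset.mul_sum]
  · have h0 : (fun i => (v i).re) ⬝ᵥ (M *ᵥ fun i => (v i).im)
        - (fun i => (v i).im) ⬝ᵥ (M *ᵥ fun i => (v i).re) = 0 := by
      rw [hsym]; ring
    simp only [dotProduct, mulVec, Finset.mul_sum, Finset.sum_sub_distrib] at h0 ⊢
    simp [Complex.mul_im, Finset.mul_sum, Finset.sum_add_distrib, Complex.im_sum]
    linarith [h0]

/-- `2 x⬝y ≤ x A⁻¹ x + y A y` for `A` positive definite. -/
private lemma quad_bound {n : ℕ} {A : Matrix (Fin n) (Fin n) ℝ} (hA : A.PosDef)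
    (x y : Fin n → ℝ) :
    2 * (x ⬝ᵥ y) ≤ x ⬝ᵥ (A⁻¹ *ᵥ x) + y ⬝ᵥ (A *ᵥ y) := by
  have hAsym : Aᵀ = A := hA.isHermitian
  have hsym : ∀ (a b : Fin n → ℝ), a ⬝ᵥ (A *ᵥ b) = b ⬝ᵥ (A *ᵥ a) := by
    intro a b
    rw [dotProduct_mulVec, ← mulVec_transpose, hAsym, dotProduct_comm]
  have hinv : A * A⁻¹ = 1 := mul_nonsing_inv _ hA.det_pos.ne'.isUnit
  set w := A⁻¹ *ᵥ x with hw
  have hAw : A *ᵥ w = x := by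
    rw [hw, mulVec_mulVec, hinv, one_mulVec]
  have h0 : 0 ≤ (y - w) ⬝ᵥ (A *ᵥ (y - w)) := hA.posSemidef.dotProduct_mulVec_nonneg _
  have hexp : (y - w) ⬝ᵥ (A *ᵥ (y - w))
      = y ⬝ᵥ (A *ᵥ y) - 2 * (x ⬝ᵥ y) + x ⬝ᵥ (A⁻¹ *ᵥ x) := by
    rw [mulVec_sub, dotProduct_sub, sub_dotProduct, sub_dotProduct, hAw]
    have h1 : w ⬝ᵥ (A *ᵥ y) = y ⬝ᵥ x := by rw [hsym, hAw, dotProduct_comm]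
    have h2 : y ⬝ᵥ x = x ⬝ᵥ y := dotProduct_comm _ _
    have h3 : w ⬝ᵥ x = x ⬝ᵥ (A⁻¹ *ᵥ x) := by rw [hw, dotProduct_comm]
    rw [h1, h3, h2]
    ring
  linarith [hexp.symm ▸ h0]

private lemma sum_smul_mulVec {n N : ℕ} (ζ : Fin N → ℝ) (B : Fin N → Matrix (Fin n) (Fin n) ℝ)
    (y : Fin n → ℝ) :
    (∑ i, ζ i • B i) *ᵥ y = ∑ i, ζ i • (B i *ᵥ y) := by
  funext j
  simp only [mulVec, dotProduct, Matrix.sum_apply, Matrix.smul_apply, smul_eq_mul,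
    Finset.sum_mul, Finset.sum_apply, Pi.smul_apply, Finset.mul_sum]
  rw [Finset.sum_comm]
  apply Finset.sum_congr rfl
  intro i _
  apply Finset.sum_congr rfl
  intro k _
  ring

private lemma dot_sum_smul_mulVec {n N : ℕ} (ζ : Fin N → ℝ)
    (B : Fin N → Matrix (Fin n) (Fin n) ℝ) (x y : Fin n → ℝ) :
    x ⬝ᵥ ((∑ i, ζ i • B i) *ᵥ y) = ∑ i, ζ i * (x ⬝ᵥ (B i *ᵥ y)) := by
  rw [sum_smul_mulVec]
  simp only [dotProduct, Finset.sum_apply, Pi.smul_apply, smul_eq_mul, Finset.mul_sum]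
  rw [Finset.sum_comm]
  apply Finset.sum_congr rfl
  intro i _
  apply Finset.sum_congr rfl
  intro j _
  ring

private lemma herm_sum {n N : ℕ} (ζ : Fin N → ℝ) (B : Fin N → Matrix (Fin n) (Fin n) ℝ)
    (hB : ∀ i, (B i).IsHermitian) : (∑ i, ζ i • B i).IsHermitian := by
  unfold Matrix.IsHermitian
  rw [conjTranspose_sum]
  apply Finset.sum_congr rfl
  intro i _
  rw [conjTranspose_smul, star_trivial, (hB i).eq]

private lemma sumPD {n N : ℕ} (ζ : Fin N → ℝ) (hζ : ∀ i, 0 < ζ i) (hsum : ∑ i, ζ i = 1)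
    (A : Fin N → Matrix (Fin n) (Fin n) ℝ) (hA : ∀ i, (A i).PosDef) :
    (∑ i, ζ i • A i).PosDef := by
  have hne : (Finset.univ : Finset (Fin N)).Nonempty := by
    rcases (Finset.univ : Finset (Fin N)).eq_empty_or_nonempty with h | h
    · rw [h, Finset.sum_empty] at hsum; norm_num at hsum
    · exact h
  refine PosDef.of_dotProduct_mulVec_pos (herm_sum ζ A fun i => (hA i).1) fun x hx => ?_
  have : (star x) ⬝ᵥ ((∑ i, ζ i • A i) *ᵥ x) = ∑ i, ζ i * (x ⬝ᵥ (A i *ᵥ x)) := by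
    rw [star_trivial, dot_sum_smul_mulVec]
  rw [this]
  exact Finset.sum_pos (fun i _ => mul_pos (hζ i) (by simpa using (hA i).dotProduct_mulVec_pos hx)) hne

/-- Matrix Jensen inequality: `∑ ζᵢ Aᵢ⁻¹ - (∑ ζᵢ Aᵢ)⁻¹` is positive semidefinite. -/
private lemma jensenPSD {n N : ℕ} (ζ : Fin N → ℝ) (hζ : ∀ i, 0 < ζ i) (hsum : ∑ i, ζ i = 1)
    (A : Fin N → Matrix (Fin n) (Fin n) ℝ) (hA : ∀ i, (A i).PosDef) :
    ((∑ i, ζ i • (A i)⁻¹) - (∑ i, ζ i • A i)⁻¹).PosSemidef := by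
  set A0 := ∑ i, ζ i • A i with hA0
  have hA0pd : A0.PosDef := sumPD ζ hζ hsum A hA
  refine PosSemidef.of_dotProduct_mulVec_nonneg ?_ ?_
  · unfold Matrix.IsHermitian
    rw [conjTranspose_sub, (herm_sum ζ _ fun i => (hA i).inv.1).eq, hA0pd.inv.1.eq]
  · intro x
    have hA0inv : A0 * A0⁻¹ = 1 := mul_nonsing_inv _ hA0pd.det_pos.ne'.isUnit
    set y := A0⁻¹ *ᵥ x with hy
    have hA0y : A0 *ᵥ y = x := by rw [hy, mulVec_mulVec, hA0inv, one_mulVec]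
    have hq : y ⬝ᵥ (A0 *ᵥ y) = ∑ i, ζ i * (y ⬝ᵥ (A i *ᵥ y)) := by
      rw [hA0, dot_sum_smul_mulVec]
    have hxyy : x ⬝ᵥ y = y ⬝ᵥ x := dotProduct_comm _ _
    have hkey : x ⬝ᵥ (A0⁻¹ *ᵥ x) = 2 * (x ⬝ᵥ y) - y ⬝ᵥ (A0 *ᵥ y) := by
      have h : y ⬝ᵥ (A0 *ᵥ y) = y ⬝ᵥ x := by rw [hA0y]
      rw [show x ⬝ᵥ (A0⁻¹ *ᵥ x) = x ⬝ᵥ y from rfl, h, ← hxyy]; ring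
    have hbig : x ⬝ᵥ (A0⁻¹ *ᵥ x) ≤ ∑ i, ζ i * (x ⬝ᵥ ((A i)⁻¹ *ᵥ x)) := by
      rw [hkey, hq]
      have h2 : 2 * (x ⬝ᵥ y) = ∑ i, ζ i * (2 * (x ⬝ᵥ y)) := by
        rw [← Finset.sum_mul, hsum, one_mul]
      rw [h2, ← Finset.sum_sub_distrib]
      apply Finset.sum_le_sum
      intro i _
      rw [← mul_sub]
      nlinarith [(hζ i).le, quad_bound (hA i) x y]
    have hlhs : (star x) ⬝ᵥ (((∑ i, ζ i • (A i)⁻¹) - A0⁻¹) *ᵥ x)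
        = (∑ i, ζ i * (x ⬝ᵥ ((A i)⁻¹ *ᵥ x))) - x ⬝ᵥ (A0⁻¹ *ᵥ x) := by
      rw [star_trivial, sub_mulVec, dotProduct_sub, dot_sum_smul_mulVec]
    rw [hlhs]
    linarith

private lemma smulPSD {n : ℕ} {c : ℝ} (hc : 0 ≤ c) {M : Matrix (Fin n) (Fin n) ℝ}
    (hM : M.PosSemidef) : (c • M).PosSemidef := by
  refine PosSemidef.of_dotProduct_mulVec_nonneg ?_ fun x => ?_
  · unfold Matrix.IsHermitian
    rw [conjTranspose_smul, star_trivial, hM.1.eq]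
  · rw [smul_mulVec, dotProduct_smul, smul_eq_mul]
    exact mul_nonneg hc (hM.dotProduct_mulVec_nonneg x)

end Aux

/-- All eigenvalues of `P₀⁻¹ L` are real and at least `1`. -/
theorem spectrum_P0inv_L {n N : ℕ} (ζ : Fin N → ℝ) (hζ : ∀ i, 0 < ζ i)
    (hsum : ∑ i, ζ i = 1)
    (Ms : Matrix (Fin n) (Fin n) ℝ) (hMs : Ms.PosDef)
    (A : Fin N → Matrix (Fin n) (Fin n) ℝ) (hA : ∀ i, (A i).PosDef)
    (A0 : Matrix (Fin n) (Fin n) ℝ) (hA0 : A0 = ∑ i, ζ i • A i)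
    (β : ℝ) (hβ : 0 < β) :
    let L : Matrix (Fin n) (Fin n) ℝ :=
      1 + (1 / Real.sqrt β) • (Ms * ∑ i, ζ i • (A i)⁻¹)
    let P0 : Matrix (Fin n) (Fin n) ℝ := 1 + (1 / Real.sqrt β) • (Ms * A0⁻¹)
    ∀ μ ∈ spectrum ℂ ((P0⁻¹ * L).map (algebraMap ℝ ℂ)), μ.im = 0 ∧ 1 ≤ μ.re := by
  intro L P0 μ hμ
  set f := algebraMap ℝ ℂ with hf
  set c : ℝ := 1 / Real.sqrt β with hcdef
  have hc : 0 < c := by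
    rw [hcdef]
    positivity
  have hA0pd : A0.PosDef := hA0 ▸ sumPD ζ hζ hsum A hA
  set D : Matrix (Fin n) (Fin n) ℝ := (∑ i, ζ i • (A i)⁻¹) - A0⁻¹ with hDdef
  have hDpsd : D.PosSemidef := by
    rw [hDdef, hA0]
    exact jensenPSD ζ hζ hsum A hA
  set E : Matrix (Fin n) (Fin n) ℝ := Ms⁻¹ + c • A0⁻¹ with hEdef
  have hEpd : E.PosDef := hMs.inv.add_posSemidef (smulPSD hc.le hA0pd.inv.posSemidef)
  have hMsdet : IsUnit Ms.det := hMs.det_pos.ne'.isUnit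
  have hP0E : P0 = Ms * E := by
    rw [hEdef, mul_add, mul_nonsing_inv _ hMsdet, mul_smul_comm]
  have hP0det : IsUnit P0.det := by
    rw [hP0E, det_mul]
    exact (mul_pos hMs.det_pos hEpd.det_pos).ne'.isUnit
  have hLP0 : L - P0 = c • (Ms * D) := by
    show (1 + c • (Ms * ∑ i, ζ i • (A i)⁻¹)) - (1 + c • (Ms * A0⁻¹)) = c • (Ms * D)
    rw [hDdef, mul_sub, smul_sub]
    abel
  -- extract an eigenvector
  obtain ⟨v, hv0, hvT⟩ : ∃ v ≠ 0, ((P0⁻¹ * L).map f) *ᵥ v = μ • v := by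
    rw [spectrum.mem_iff, Matrix.isUnit_iff_isUnit_det, isUnit_iff_ne_zero, not_ne_iff] at hμ
    obtain ⟨v, hv0, hv⟩ := (Matrix.exists_mulVec_eq_zero_iff).mpr hμ
    refine ⟨v, hv0, ?_⟩
    rw [sub_mulVec, sub_eq_zero, Matrix.algebraMap_eq_diagonal] at hv
    rw [← hv]
    funext i
    simp [mulVec_diagonal, Pi.algebraMap_apply]
  -- L v = μ P0 v
  have hmul : P0 * (P0⁻¹ * L) = L := by
    rw [← mul_assoc, mul_nonsing_inv _ hP0det, one_mul]
  have hLv : (L.map f) *ᵥ v = μ • ((P0.map f) *ᵥ v) := by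
    calc (L.map f) *ᵥ v = ((P0.map f) * ((P0⁻¹ * L).map f)) *ᵥ v := by
          rw [← Matrix.map_mul, hmul]
      _ = (P0.map f) *ᵥ (((P0⁻¹ * L).map f) *ᵥ v) := by rw [mulVec_mulVec]
      _ = (P0.map f) *ᵥ (μ • v) := by rw [hvT]
      _ = μ • ((P0.map f) *ᵥ v) := mulVec_smul _ _ _
  have hmapsmul : ∀ (r : ℝ) (X : Matrix (Fin n) (Fin n) ℝ),
      (r • X).map f = (r : ℂ) • X.map f := by
    intro r X
    ext i j
    simp [Matrix.map_apply, hf]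
  have hmapsub : (L - P0).map f = L.map f - P0.map f := by
    ext i j
    simp [Matrix.map_apply]
  have hsub : ((L - P0).map f) *ᵥ v = (μ - 1) • ((P0.map f) *ᵥ v) := by
    rw [hmapsub, sub_mulVec, hLv, sub_smul, one_smul]
  have hMsinvMsD : Ms⁻¹ * (Ms * D) = D := by
    rw [← mul_assoc, nonsing_inv_mul _ hMsdet, one_mul]
  have hMsinvP0 : Ms⁻¹ * P0 = E := by
    rw [hP0E, ← mul_assoc, nonsing_inv_mul _ hMsdet, one_mul]
  have h3 : (c : ℂ) • ((D.map f) *ᵥ v) = (μ - 1) • ((E.map f) *ᵥ v) := by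
    have e1 : (Ms⁻¹.map f) *ᵥ (((L - P0).map f) *ᵥ v) = (c : ℂ) • ((D.map f) *ᵥ v) := by
      rw [hLP0, hmapsmul, smul_mulVec, mulVec_smul, mulVec_mulVec, ← Matrix.map_mul,
        hMsinvMsD]
    have e2 : (Ms⁻¹.map f) *ᵥ ((μ - 1) • ((P0.map f) *ᵥ v)) = (μ - 1) • ((E.map f) *ᵥ v) := by
      rw [mulVec_smul, mulVec_mulVec, ← Matrix.map_mul, hMsinvP0]
    rw [← e1, ← e2, hsub]
  -- take quadratic forms
  set a : Fin n → ℝ := fun i => (v i).re with hadef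
  set b : Fin n → ℝ := fun i => (v i).im with hbdef
  have hpq : (c : ℂ) * (star v ⬝ᵥ ((D.map f) *ᵥ v)) = (μ - 1) * (star v ⬝ᵥ ((E.map f) *ᵥ v)) := by
    have := congrArg (fun w => star v ⬝ᵥ w) h3
    simpa [dotProduct_smul, smul_eq_mul] using this
  set pr : ℝ := a ⬝ᵥ (D *ᵥ a) + b ⬝ᵥ (D *ᵥ b) with hprdef
  set qr : ℝ := a ⬝ᵥ (E *ᵥ a) + b ⬝ᵥ (E *ᵥ b) with hqrdef
  have hp : star v ⬝ᵥ ((D.map f) *ᵥ v) = (pr : ℂ) := quad_map_eq D hDpsd.1 v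
  have hq : star v ⬝ᵥ ((E.map f) *ᵥ v) = (qr : ℂ) := quad_map_eq E hEpd.1 v
  have hprpos : 0 ≤ pr := by
    have h1 := hDpsd.dotProduct_mulVec_nonneg a
    have h2 := hDpsd.dotProduct_mulVec_nonneg b
    rw [star_trivial] at h1 h2
    rw [hprdef]
    linarith
  have hab : a ≠ 0 ∨ b ≠ 0 := by
    by_contra h
    push_neg at h
    apply hv0
    funext i
    have ha := congrFun h.1 i
    have hb := congrFun h.2 i
    simp only [hadef, hbdef, Pi.zero_apply] at ha hb
    exact Complex.ext ha hb
  have hqrpos : 0 < qr := by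
    rw [hqrdef]
    rcases hab with h | h
    · have h1 := hEpd.dotProduct_mulVec_pos h
      have h2 := hEpd.posSemidef.dotProduct_mulVec_nonneg b
      rw [star_trivial] at h1 h2
      linarith
    · have h1 := hEpd.posSemidef.dotProduct_mulVec_nonneg a
      have h2 := hEpd.dotProduct_mulVec_pos h
      rw [star_trivial] at h1 h2
      linarith
  -- conclude
  rw [hp, hq] at hpq
  have hqrne : (qr : ℂ) ≠ 0 := by
    exact_mod_cast hqrpos.ne'
  have h5 : μ - 1 = ((c * pr / qr : ℝ) : ℂ) := by
    have hd : μ - 1 = ((c : ℂ) * (pr : ℂ)) / (qr : ℂ) := by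
      rw [eq_div_iff hqrne]
      exact hpq.symm
    rw [hd]
    push_cast
    ring
  have hμeq : μ = ((1 + c * pr / qr : ℝ) : ℂ) := by
    push_cast at h5 ⊢
    linear_combination h5
  constructor
  · rw [hμeq]
    simp
  · rw [hμeq]
    simp only [Complex.ofReal_re]
    have : 0 ≤ c * pr / qr := div_nonneg (mul_nonneg hc.le hprpos) hqrpos.le
    linarith
end

section
/- Let Kᵢ = Aᵢ⁻¹ M_s, i = 1,…,N, where the Aᵢ are symmetric positive definite and M_s is symmetric positive definite, and let ζᵢ > 0 sum to one. Then the matrix ∑ᵢ ζᵢ Kᵢ² − (∑ᵢ ζᵢ Kᵢ)² has real and nonnegative eigenvalues. -/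
open Matrix
open scoped ComplexOrder
open scoped MatrixOrder

set_option maxHeartbeats 1000000

lemma psd_spectrum_aux {m : Type*} [Fintype m] [DecidableEq m]
    {M : Matrix m m ℂ} (hM : M.PosSemidef) :
    ∀ μ ∈ spectrum ℂ M, μ.im = 0 ∧ 0 ≤ μ.re := by
  intro μ hμ
  have h1 := hM.isHermitian
  rw [h1.spectral_theorem, Unitary.conjStarAlgAut_apply, Unitary.spectrum_star_right_conjugate,
    spectrum_diagonal] at hμ
  obtain ⟨i, hi⟩ := hμ
  have hnn := hM.eigenvalues_nonneg i
  have : ((h1.eigenvalues i : ℝ) : ℂ) = μ := hi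
  rw [← this]
  exact ⟨Complex.ofReal_im _, by simpa using hnn⟩

lemma posSemidef_sum' {ι : Type*} {m : Type*} [Fintype m] (s : Finset ι)
    (g : ι → Matrix m m ℂ) (h : ∀ i ∈ s, (g i).PosSemidef) :
    (∑ i ∈ s, g i).PosSemidef := by
  classical
  induction s using Finset.induction with
  | empty => simpa using (Matrix.PosSemidef.zero (n := m) (R := ℂ))
  | insert _ _ hx ih =>
    rw [Finset.sum_insert hx]
    exact (h _ (Finset.mem_insert_self _ _)).add
      (ih fun i hi => h i (Finset.mem_insert_of_mem hi))


/-- The matrix `∑ ζᵢ Kᵢ² − (∑ ζᵢ Kᵢ)²` with `Kᵢ = Aᵢ⁻¹ M_s` has real nonnegative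
eigenvalues. -/
theorem variance_matrix_nonneg_spectrum {n N : ℕ}
    (ζ : Fin N → ℝ) (hζ : ∀ i, 0 < ζ i) (hsum : ∑ i, ζ i = 1)
    (A : Fin N → Matrix (Fin n) (Fin n) ℝ) (hA : ∀ i, (A i).PosDef)
    (Ms : Matrix (Fin n) (Fin n) ℝ) (hMs : Ms.PosDef) :
    let K : Fin N → Matrix (Fin n) (Fin n) ℝ := fun i => (A i)⁻¹ * Ms
    ∀ μ ∈ spectrum ℂ
        (((∑ i, ζ i • (K i * K i)) -
            (∑ i, ζ i • K i) * (∑ i, ζ i • K i)).map (algebraMap ℝ ℂ)),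
      μ.im = 0 ∧ 0 ≤ μ.re := by
  intro K
  have hK : ∀ i, K i = (A i)⁻¹ * Ms := fun i => rfl
  set S := CFC.sqrt Ms with hSdef
  have hS : S * S = Ms := CFC.sqrt_mul_sqrt_self Ms hMs.posSemidef.nonneg
  have hSherm : Sᴴ = S := (CFC.sqrt_nonneg Ms).posSemidef.isHermitian
  have hSt : Sᵀ = S := by
    ext i j
    simpa [conjTranspose_apply] using congrFun (congrFun hSherm i) j
  set D : Fin N → Matrix (Fin n) (Fin n) ℝ := fun i => (A i)⁻¹ * S with hDdef
  set E := ∑ j, ζ j • D j with hEdef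
  have hAt : ∀ i, ((A i)⁻¹)ᵀ = (A i)⁻¹ := by
    intro i
    rw [transpose_nonsing_inv]
    congr 1
    ext a b
    simpa [conjTranspose_apply] using congrFun (congrFun (hA i).isHermitian a) b
  have hDt : ∀ i, (D i)ᵀ = S * (A i)⁻¹ := by
    intro i
    simp [hDdef, transpose_mul, hSt, hAt]
  have hEt : Eᵀ = ∑ j, ζ j • (D j)ᵀ := by
    simp [hEdef, transpose_sum, transpose_smul]
  set P := ∑ i, ζ i • ((D i - E) * (D i - E)ᵀ) with hPdef
  have hP1 : P = (∑ i, ζ i • (D i * (D i)ᵀ)) - E * Eᵀ := by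
    have expand : ∀ i, ζ i • ((D i - E) * (D i - E)ᵀ)
        = ζ i • (D i * (D i)ᵀ) - (ζ i • D i) * Eᵀ - E * (ζ i • (D i)ᵀ)
          + ζ i • (E * Eᵀ) := by
      intro i
      simp only [transpose_sub, mul_sub, sub_mul, smul_sub, smul_mul_assoc, mul_smul_comm]
      abel
    rw [hPdef]
    simp_rw [expand]
    rw [Finset.sum_add_distrib, Finset.sum_sub_distrib, Finset.sum_sub_distrib,
      ← Finset.sum_mul, ← Finset.mul_sum, ← Finset.sum_smul, hsum, one_smul,
      ← hEdef, ← hEt]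
    abel
  have hES : Eᵀ * S = S * E := by
    rw [hEt, hEdef, Finset.sum_mul, Finset.mul_sum]
    refine Finset.sum_congr rfl fun i _ => ?_
    rw [hDt]
    simp [hDdef, smul_mul_assoc, mul_smul_comm, mul_assoc]
  have hESK : E * S = ∑ i, ζ i • K i := by
    rw [hEdef, Finset.sum_mul]
    refine Finset.sum_congr rfl fun i _ => ?_
    rw [smul_mul_assoc, hK i, hDdef]
    simp [mul_assoc, hS]
  have h1 : (∑ i, ζ i • (D i * (D i)ᵀ)) * Ms = ∑ i, ζ i • (K i * K i) := by
    rw [Finset.sum_mul]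
    refine Finset.sum_congr rfl fun i _ => ?_
    rw [smul_mul_assoc]
    congr 1
    rw [hDt, hK i, ← hS]
    simp [hDdef, mul_assoc]
  have h2 : (E * Eᵀ) * Ms = (∑ i, ζ i • K i) * (∑ i, ζ i • K i) := by
    calc E * Eᵀ * Ms = E * ((Eᵀ * S) * S) := by rw [← hS]; simp [mul_assoc]
      _ = E * ((S * E) * S) := by rw [hES]
      _ = (E * S) * (E * S) := by simp [mul_assoc]
      _ = _ := by rw [hESK]
  have hKey : (∑ i, ζ i • (K i * K i)) - (∑ i, ζ i • K i) * (∑ i, ζ i • K i)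
      = P * Ms := by
    rw [hP1, sub_mul, h1, h2]
  intro μ hμ
  rw [hKey] at hμ
  by_cases hμ0 : μ = 0
  · exact ⟨by simp [hμ0], by simp [hμ0]⟩
  · set f := algebraMap ℝ ℂ with hf
    have hmap : (P * Ms).map f
        = (P.map f * S.map f) * S.map f := by
      rw [← hS, ← Matrix.map_mul, ← Matrix.map_mul, mul_assoc]
    rw [hmap] at hμ
    have hμ' : μ ∈ spectrum ℂ (S.map f * (P.map f * S.map f)) := by
      have h2 : μ ∈ spectrum ℂ ((P.map f * S.map f) * S.map f) \ {0} := ⟨hμ, hμ0⟩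
      rw [spectrum.nonzero_mul_comm] at h2
      exact h2.1
    have hmapCT : ∀ (M : Matrix (Fin n) (Fin n) ℝ), (M.map f)ᴴ = Mᵀ.map f := by
      intro M; ext i j
      simp [conjTranspose_apply, Matrix.map_apply, hf, Complex.conj_ofReal]
    have hSCT : (S.map f)ᴴ = S.map f := by rw [hmapCT, hSt]
    have hP' : (P.map f).PosSemidef := by
      have hPalt : P = ∑ i, (Real.sqrt (ζ i) • (D i - E))
          * (Real.sqrt (ζ i) • (D i - E))ᵀ := by
        rw [hPdef]
        refine Finset.sum_congr rfl fun i _ => ?_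
        rw [transpose_smul, smul_mul_smul_comm, Real.mul_self_sqrt (hζ i).le]
      have hFM : ∀ X : Matrix (Fin n) (Fin n) ℝ, X.map f = f.mapMatrix X :=
        fun _ => rfl
      rw [hPalt, hFM, map_sum]
      refine posSemidef_sum' _ _ fun i _ => ?_
      rw [_root_.map_mul, ← hFM, ← hFM, ← hmapCT]
      exact posSemidef_self_mul_conjTranspose _
    have hPSD : (S.map f * (P.map f * S.map f)).PosSemidef := by
      have h3 := hP'.mul_mul_conjTranspose_same (S.map f)
      rw [hSCT] at h3
      rw [← mul_assoc]
      exact h3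
    exact psd_spectrum_aux hPSD μ hμ'
end

section
/- In the setting of Lemma 'Spectrum of S̃⁻¹S': let A = diag(ζ₁A₁,…,ζ_N A_N) with symmetric positive definite Aᵢ, M = diag(M_s,…,M_s) with M_s symmetric positive definite, Z = diag(ζᵢ I), 𝟙 the stacked identity, and M_γ = M((1+γ)Z − γZ𝟙𝟙ᵀZ). Then for γ = 0, the matrix H̃ := A⁻¹ M_γ A⁻¹ Z 𝟙 M_s 𝟙ᵀ Z has the same nonzero eigenvalues as the n×n matrix ∑ᵢ ζᵢ Kᵢ² where Kᵢ = Aᵢ⁻¹ M_s; consequently σ(I + (1/β)H̃) = {1} ∪ {1 + μⱼ/β : μⱼ ∈ σ(∑ᵢ ζᵢ Kᵢ²)}. -/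
open Matrix Pointwise

namespace SpecAux

variable {N n : ℕ}

def bd (B : Fin N → Matrix (Fin n) (Fin n) ℝ) : Matrix (Fin N × Fin n) (Fin N × Fin n) ℝ :=
  Matrix.of fun p q => if p.1 = q.1 then B p.1 p.2 q.2 else 0

lemma bd_mul (B C : Fin N → Matrix (Fin n) (Fin n) ℝ) :
    bd B * bd C = bd fun i => B i * C i := by
  ext ⟨i, a⟩ ⟨k, b⟩
  simp only [bd, Matrix.mul_apply, Matrix.of_apply, Fintype.sum_prod_type]
  rw [Finset.sum_eq_single i]
  · by_cases h : i = k
    · subst h; simp [Matrix.mul_apply]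
    · simp [h]
  · intro j _ hj; simp [Ne.symm hj]
  · simp

lemma bd_one : bd (fun _ : Fin N => (1 : Matrix (Fin n) (Fin n) ℝ)) = 1 := by
  ext ⟨i, a⟩ ⟨k, b⟩
  by_cases h : i = k
  · subst h; simp [bd, Matrix.one_apply, Prod.ext_iff]
  · simp [bd, Matrix.one_apply, Prod.ext_iff, h]

lemma mem_spectrum_iff {m : Type*} [Fintype m] [DecidableEq m] (M : Matrix m m ℝ) (μ : ℝ) :
    μ ∈ spectrum ℝ M ↔ ∃ v ≠ 0, M.mulVec v = μ • v := by
  rw [spectrum.mem_iff, Matrix.isUnit_iff_isUnit_det, isUnit_iff_ne_zero, not_not,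
    ← Matrix.exists_mulVec_eq_zero_iff]
  simp only [Algebra.algebraMap_eq_smul_one, Matrix.sub_mulVec, Matrix.smul_mulVec,
    Matrix.one_mulVec, sub_eq_zero]
  constructor
  · rintro ⟨v, hv, h⟩; exact ⟨v, hv, h.symm⟩
  · rintro ⟨v, hv, h⟩; exact ⟨v, hv, h.symm⟩

lemma spec_mul_comm_mp {m l : Type*} [Fintype m] [Fintype l] [DecidableEq m] [DecidableEq l]
    (F : Matrix m l ℝ) (G : Matrix l m ℝ) {μ : ℝ} (hμ : μ ≠ 0)
    (h : μ ∈ spectrum ℝ (F * G)) : μ ∈ spectrum ℝ (G * F) := by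
  obtain ⟨v, hv0, hv⟩ := (mem_spectrum_iff _ _).mp h
  refine (mem_spectrum_iff _ _).mpr ⟨G.mulVec v, ?_, ?_⟩
  · intro h0
    have : (F * G).mulVec v = 0 := by
      rw [← Matrix.mulVec_mulVec, h0, Matrix.mulVec_zero]
    rw [hv] at this
    rcases smul_eq_zero.mp this with h' | h'
    · exact hμ h'
    · exact hv0 h'
  · rw [← Matrix.mulVec_mulVec, Matrix.mulVec_mulVec (M := F), hv, Matrix.mulVec_smul]

lemma spec_mul_comm {m l : Type*} [Fintype m] [Fintype l] [DecidableEq m] [DecidableEq l]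
    (F : Matrix m l ℝ) (G : Matrix l m ℝ) {μ : ℝ} (hμ : μ ≠ 0) :
    μ ∈ spectrum ℝ (F * G) ↔ μ ∈ spectrum ℝ (G * F) :=
  ⟨spec_mul_comm_mp F G hμ, spec_mul_comm_mp G F hμ⟩

end SpecAux

/-- Spectrum of `S̃⁻¹S` for `γ = 0`: the nonzero eigenvalues of
`H̃ = A⁻¹ M_γ A⁻¹ Z 𝟙 M_s 𝟙ᵀ Z` are those of `∑ᵢ ζᵢ Kᵢ²`, and
`σ(I + H̃/β) = {1} ∪ {1 + μ/β : μ ∈ σ(∑ᵢ ζᵢ Kᵢ²)}`. -/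
theorem spectrum_Stilde_inv_S {N n : ℕ} (hN : 2 ≤ N) (hn : 0 < n)
    (ζ : Fin N → ℝ) (hζ : ∀ i, 0 < ζ i) (hsum : ∑ i, ζ i = 1)
    (Ablk : Fin N → Matrix (Fin n) (Fin n) ℝ) (hA : ∀ i, (Ablk i).PosDef)
    (Ms : Matrix (Fin n) (Fin n) ℝ) (hMs : Ms.PosDef) (β : ℝ) (hβ : 0 < β) :
    let A : Matrix (Fin N × Fin n) (Fin N × Fin n) ℝ :=
      Matrix.of fun p q => if p.1 = q.1 then ζ p.1 * Ablk p.1 p.2 q.2 else 0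
    let Z : Matrix (Fin N × Fin n) (Fin N × Fin n) ℝ := Matrix.diagonal fun p => ζ p.1
    let M : Matrix (Fin N × Fin n) (Fin N × Fin n) ℝ :=
      Matrix.of fun p q => if p.1 = q.1 then Ms p.2 q.2 else 0
    let E : Matrix (Fin N × Fin n) (Fin n) ℝ :=
      Matrix.of fun p b => if p.2 = b then (1 : ℝ) else 0
    let γ : ℝ := 0
    let Mγ : Matrix (Fin N × Fin n) (Fin N × Fin n) ℝ :=
      M * ((1 + γ) • Z - γ • (Z * (E * Eᵀ) * Z))
    let Ht : Matrix (Fin N × Fin n) (Fin N × Fin n) ℝ :=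
      A⁻¹ * Mγ * A⁻¹ * (Z * E * Ms * Eᵀ * Z)
    let K : Fin N → Matrix (Fin n) (Fin n) ℝ := fun i => (Ablk i)⁻¹ * Ms
    (∀ μ : ℝ, μ ≠ 0 →
      (μ ∈ spectrum ℝ Ht ↔ μ ∈ spectrum ℝ (∑ i, ζ i • (K i * K i)))) ∧
    spectrum ℝ ((1 : Matrix (Fin N × Fin n) (Fin N × Fin n) ℝ) + (1 / β) • Ht) =
      {1} ∪ {t | ∃ μ ∈ spectrum ℝ (∑ i, ζ i • (K i * K i)), t = 1 + μ / β} := by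
  intro A Z M E γ Mγ Ht K
  have hζ' : ∀ i, ζ i ≠ 0 := fun i => (hζ i).ne'
  -- explicit form of A⁻¹
  have hABD : A = SpecAux.bd fun i => ζ i • Ablk i := rfl
  have hAinv : A⁻¹ = SpecAux.bd fun i => (ζ i)⁻¹ • (Ablk i)⁻¹ := by
    apply Matrix.inv_eq_right_inv
    rw [hABD, SpecAux.bd_mul]
    have h1 : (fun i => (ζ i • Ablk i) * ((ζ i)⁻¹ • (Ablk i)⁻¹)) =
        fun _ : Fin N => (1 : Matrix (Fin n) (Fin n) ℝ) := by
      funext i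
      rw [Matrix.smul_mul, Matrix.mul_smul, smul_smul, mul_inv_cancel₀ (hζ' i),
        Matrix.mul_nonsing_inv _ (isUnit_iff_ne_zero.mpr (hA i).det_pos.ne'), one_smul]
    rw [h1, SpecAux.bd_one]
  have hMbd : M = SpecAux.bd fun _ => Ms := rfl
  have hZbd : Z = SpecAux.bd fun i => ζ i • (1 : Matrix (Fin n) (Fin n) ℝ) := by
    show Matrix.diagonal (fun p : Fin N × Fin n => ζ p.1) = _
    ext ⟨i, a⟩ ⟨k, b⟩
    by_cases h : i = k
    · subst h
      by_cases h2 : a = b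
      · subst h2; simp [Matrix.diagonal_apply, SpecAux.bd, Matrix.one_apply]
      · simp [Matrix.diagonal_apply, SpecAux.bd, Matrix.one_apply, h2, Prod.ext_iff]
    · simp [Matrix.diagonal_apply, SpecAux.bd, h, Prod.ext_iff]
  have hMγ : Mγ = M * Z := by
    show M * ((1 + γ) • Z - γ • (Z * (E * Eᵀ) * Z)) = M * Z
    have : γ = 0 := rfl
    rw [this]
    norm_num
  have hD : A⁻¹ * Mγ * A⁻¹ =
      SpecAux.bd fun i => (ζ i)⁻¹ • ((Ablk i)⁻¹ * Ms * (Ablk i)⁻¹) := by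
    rw [hMγ, hMbd, hZbd, hAinv, SpecAux.bd_mul, SpecAux.bd_mul, SpecAux.bd_mul]
    congr 1
    funext i
    simp only [Matrix.smul_mul, Matrix.mul_smul, smul_smul, mul_one]
    congr 1
    field_simp
  have hE : E = Matrix.of fun (p : Fin N × Fin n) b => if p.2 = b then (1 : ℝ) else 0 := rfl
  have hZdef : Z = Matrix.diagonal fun p : Fin N × Fin n => ζ p.1 := rfl
  have hR : Z * E * Ms * Eᵀ * Z =
      Matrix.of fun p q : Fin N × Fin n => ζ p.1 * ζ q.1 * Ms p.2 q.2 := by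
    ext ⟨i, a⟩ ⟨k, b⟩
    rw [hE, hZdef]
    simp [Matrix.mul_apply, Matrix.diagonal_apply, Matrix.transpose_apply,
      Fintype.sum_prod_type, Prod.ext_iff, ite_and, mul_comm, mul_assoc, mul_left_comm]
  set F : Matrix (Fin N × Fin n) (Fin n) ℝ :=
    Matrix.of fun p b => (K p.1 * K p.1) p.2 b with hF
  set G : Matrix (Fin n) (Fin N × Fin n) ℝ :=
    Matrix.of fun a q => if a = q.2 then ζ q.1 else 0 with hG
  have hK2 : ∀ i, (Ablk i)⁻¹ * Ms * (Ablk i)⁻¹ * Ms = K i * K i := by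
    intro i
    rw [mul_assoc]
  have hHt : Ht = F * G := by
    show A⁻¹ * Mγ * A⁻¹ * (Z * E * Ms * Eᵀ * Z) = F * G
    rw [hD, hR]
    ext ⟨i, a⟩ ⟨k, b⟩
    have hRHS : (F * G) (i, a) (k, b) = ((Ablk i)⁻¹ * Ms * (Ablk i)⁻¹ * Ms) a b * ζ k := by
      rw [hK2 i]
      simp [hF, hG, Matrix.mul_apply, mul_ite, mul_zero]
    rw [hRHS]
    simp only [SpecAux.bd, Matrix.mul_apply, Matrix.of_apply, Fintype.sum_prod_type,
      Matrix.smul_apply, smul_eq_mul, ite_mul, zero_mul]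
    rw [Finset.sum_eq_single i]
    · simp only [eq_self_iff_true, if_true]
      rw [Finset.sum_mul]
      apply Finset.sum_congr rfl
      intro c _
      field_simp [hζ' i]
    · intro j _ hj; simp [Ne.symm hj]
    · simp
  have hGF : G * F = ∑ i, ζ i • (K i * K i) := by
    ext a b
    simp only [hF, hG, Matrix.mul_apply, Matrix.of_apply, Fintype.sum_prod_type,
      Matrix.sum_apply, Matrix.smul_apply, smul_eq_mul, ite_mul, zero_mul]
    apply Finset.sum_congr rfl
    intro j _
    simp [Finset.sum_ite_eq']
  -- Part 1
  have hpart1 : ∀ μ : ℝ, μ ≠ 0 →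
      (μ ∈ spectrum ℝ Ht ↔ μ ∈ spectrum ℝ (∑ i, ζ i • (K i * K i))) := by
    intro μ hμ
    rw [hHt, ← hGF]
    exact SpecAux.spec_mul_comm F G hμ
  -- 0 is an eigenvalue of Ht
  have h0 : (0 : ℝ) ∈ spectrum ℝ Ht := by
    rw [SpecAux.mem_spectrum_iff]
    set i0 : Fin N := ⟨0, by omega⟩ with hi0
    set i1 : Fin N := ⟨1, by omega⟩ with hi1
    have hne : i0 ≠ i1 := by simp [hi0, hi1, Fin.ext_iff]
    refine ⟨fun p => (if p.1 = i0 then ζ i1 else 0) + (if p.1 = i1 then -ζ i0 else 0), ?_, ?_⟩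
    · intro hv
      have := congrFun hv (i0, ⟨0, hn⟩)
      simp [hne, Pi.zero_apply] at this
      exact hζ' i1 this
    · have hGv : G.mulVec (fun p => (if p.1 = i0 then ζ i1 else 0) +
          (if p.1 = i1 then -ζ i0 else 0)) = 0 := by
        ext a
        simp only [Matrix.mulVec, dotProduct, hG, Matrix.of_apply,
          Fintype.sum_prod_type, ite_mul, zero_mul, Pi.zero_apply]
        rw [Finset.sum_comm]
        rw [Finset.sum_eq_single a]
        · simp only [eq_self_iff_true, if_true, mul_add, mul_ite, mul_zero,
            Finset.sum_add_distrib, Finset.sum_ite_eq', Finset.mem_univ, if_true]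
          ring
        · intro c _ hc; simp [Ne.symm hc]
        · simp
      rw [hHt, ← Matrix.mulVec_mulVec, hGv, Matrix.mulVec_zero, zero_smul]
  refine ⟨hpart1, ?_⟩
  -- Part 2
  have hβ' : (1 : ℝ) / β ≠ 0 := by positivity
  have hshift : spectrum ℝ ((1 : Matrix (Fin N × Fin n) (Fin N × Fin n) ℝ) + (1 / β) • Ht) =
      {(1 : ℝ)} + (Units.mk0 (1 / β) hβ') • spectrum ℝ Ht := by
    rw [← spectrum.unit_smul_eq_smul, spectrum.singleton_add_eq, RingHom.map_one,
      Units.smul_def, Units.val_mk0]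
  rw [hshift]
  ext t
  simp only [Set.mem_add, Set.mem_smul_set, Set.mem_singleton_iff, Set.mem_union,
    Set.mem_setOf_eq, Units.smul_def, Units.val_mk0, smul_eq_mul]
  constructor
  · rintro ⟨x, hx, y, ⟨μ, hμ, rfl⟩, rfl⟩
    subst hx
    by_cases h : μ = 0
    · left; rw [h]; ring
    · right
      exact ⟨μ, (hpart1 μ h).mp hμ, by ring⟩
  · rintro (h | ⟨μ, hμ, rfl⟩)
    · exact ⟨1, rfl, 0, ⟨0, h0, by rw [mul_zero]⟩, by rw [h]; ring⟩
    · by_cases h : μ = 0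
      · exact ⟨1, rfl, 0, ⟨0, h0, by rw [mul_zero]⟩, by rw [h]; ring⟩
      · exact ⟨1, rfl, 1 / β * μ, ⟨μ, (hpart1 μ h).mpr hμ, rfl⟩,
          by ring⟩
end

section
/- Every vector v in ℋ ∩ 𝒦 (i.e. satisfying 𝟙ᵀ Z v = 0 and 𝟙ᵀ A v = 0) satisfies S v = S_LR v, where S = A M_γ⁻¹ A + (1/β) Z𝟙 M_s 𝟙ᵀZ and S_LR = (A + (1/√β) Z𝟙 M_s 𝟙ᵀZ) M_γ⁻¹ (A + (1/√β) Z𝟙 M_s 𝟙ᵀZ). Hence 1 is an eigenvalue of S_LR⁻¹S with geometric multiplicity at least (N−2)n. -/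
open Matrix

private lemma SLR_mul_inv_aux {I : Type*} [Fintype I] [DecidableEq I] {n : ℕ}
    (Z Zi M Mi : Matrix I I ℝ) (E : Matrix I (Fin n) ℝ)
    (γ : ℝ) (hγ : 0 ≤ γ)
    (h1 : Z * Zi = 1) (h2 : M * Mi = 1) (h3 : Eᵀ * (Z * E) = 1) :
    (M * ((1 + γ) • Z - γ • (Z * (E * Eᵀ) * Z))) *
      ((1+γ)⁻¹ • (Zi * Mi) + (γ/(1+γ)) • (E * (Eᵀ * Mi))) = 1 := by
  have hγ1 : (1:ℝ) + γ ≠ 0 := by positivity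
  have r1 : ∀ X : Matrix I I ℝ, Z * (Zi * X) = X := fun X => by
    rw [← Matrix.mul_assoc, h1, Matrix.one_mul]
  have r2 : ∀ X : Matrix (Fin n) I ℝ, Eᵀ * (Z * (E * X)) = X := fun X => by
    rw [← Matrix.mul_assoc Z, ← Matrix.mul_assoc, h3, Matrix.one_mul]
  simp only [Matrix.mul_assoc, Matrix.mul_sub, Matrix.sub_mul, Matrix.mul_add, Matrix.add_mul,
    Matrix.mul_smul, Matrix.smul_mul, smul_smul, r1, r2, h2]
  match_scalars <;> field_simp <;> ring

private lemma SLR_low_rank_aux {I : Type*} [Fintype I] [DecidableEq I] {n : ℕ}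
    (Z Zi Mi : Matrix I I ℝ) (E : Matrix I (Fin n) ℝ)
    (Ms Msi : Matrix (Fin n) (Fin n) ℝ)
    (γ : ℝ) (hγ : 0 ≤ γ)
    (h1 : Z * Zi = 1) (h3 : Eᵀ * (Z * E) = 1)
    (h4 : Eᵀ * Mi = Msi * Eᵀ) (h5 : Ms * Msi = 1) :
    (Z * E * Ms * Eᵀ * Z) *
      ((1+γ)⁻¹ • (Zi * Mi) + (γ/(1+γ)) • (E * (Eᵀ * Mi))) = Z * (E * Eᵀ) := by
  have hγ1 : (1:ℝ) + γ ≠ 0 := by positivity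
  have r1 : ∀ X : Matrix I I ℝ, Z * (Zi * X) = X := fun X => by
    rw [← Matrix.mul_assoc, h1, Matrix.one_mul]
  have r2 : ∀ X : Matrix (Fin n) I ℝ, Eᵀ * (Z * (E * X)) = X := fun X => by
    rw [← Matrix.mul_assoc Z, ← Matrix.mul_assoc, h3, Matrix.one_mul]
  have r3 : ∀ X : Matrix (Fin n) I ℝ, Ms * (Msi * X) = X := fun X => by
    rw [← Matrix.mul_assoc, h5, Matrix.one_mul]
  simp only [Matrix.mul_assoc, Matrix.mul_add, Matrix.mul_smul, smul_smul, r1, r2, h4, r3]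
  match_scalars <;> field_simp

private lemma SLR_posdef_blk_aux {N n : ℕ} (ζ : Fin N → ℝ) (hζ : ∀ j, 0 < ζ j)
    (Ablk : Fin N → Matrix (Fin n) (Fin n) ℝ) (hA : ∀ j, (Ablk j).PosDef) :
    (Matrix.of fun p q : Fin N × Fin n =>
      if p.1 = q.1 then ζ p.1 * Ablk p.1 p.2 q.2 else 0).PosDef := by
  have hsymm : ∀ j a b, Ablk j a b = Ablk j b a := fun j a b => by
    conv_lhs => rw [← (hA j).isHermitian.eq]
    simp [conjTranspose_apply]
  refine posDef_iff_dotProduct_mulVec.mpr ⟨?_, ?_⟩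
  · ext ⟨i, a⟩ ⟨j, b⟩
    simp only [conjTranspose_apply, of_apply, star_trivial]
    rcases eq_or_ne i j with rfl | hij
    · simp [hsymm]
    · simp [hij, Ne.symm hij]
  · intro x hx
    have hquad : star x ⬝ᵥ ((Matrix.of fun p q : Fin N × Fin n =>
        if p.1 = q.1 then ζ p.1 * Ablk p.1 p.2 q.2 else 0) *ᵥ x) =
        ∑ i, ζ i * (star (fun a => x (i,a)) ⬝ᵥ (Ablk i *ᵥ fun a => x (i,a))) := by
      simp only [dotProduct, mulVec, of_apply, star_trivial, Pi.star_apply,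
        Fintype.sum_prod_type, ite_mul, zero_mul, Finset.sum_ite_eq, Finset.mem_univ, if_true,
        Finset.mul_sum]
      refine Finset.sum_congr rfl fun i _ => Finset.sum_congr rfl fun a _ => ?_
      simp only [mul_ite, mul_zero]
      rw [Finset.sum_comm]
      simp only [Finset.sum_ite_eq, Finset.mem_univ, if_true]
      exact Finset.sum_congr rfl fun b _ => by ring
    rw [hquad]
    obtain ⟨⟨i0, a0⟩, hp⟩ := Function.ne_iff.mp hx
    refine Finset.sum_pos' (fun i _ => mul_nonneg (hζ i).le ((hA i).posSemidef.dotProduct_mulVec_nonneg _)) ⟨i0,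
      Finset.mem_univ _, mul_pos (hζ i0) ((hA i0).dotProduct_mulVec_pos fun h => hp (congrFun h a0))⟩

private lemma SLR_matching_aux {N n : ℕ} (hN : 2 ≤ N)
    (ζ : Fin N → ℝ) (hζ : ∀ j, 0 < ζ j) (hsum : ∑ j, ζ j = 1)
    (Ablk : Fin N → Matrix (Fin n) (Fin n) ℝ) (hA : ∀ j, (Ablk j).PosDef)
    (Ms : Matrix (Fin n) (Fin n) ℝ) (hMs : Ms.PosDef)
    (β γ : ℝ) (hβ : 0 < β) (hγ : 0 ≤ γ)
    (A Z M Mγ S SLR : Matrix (Fin N × Fin n) (Fin N × Fin n) ℝ)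
    (E : Matrix (Fin N × Fin n) (Fin n) ℝ)
    (hAdef : A = Matrix.of fun p q => if p.1 = q.1 then ζ p.1 * Ablk p.1 p.2 q.2 else 0)
    (hZdef : Z = Matrix.diagonal fun p => ζ p.1)
    (hMdef : M = Matrix.of fun p q => if p.1 = q.1 then Ms p.2 q.2 else 0)
    (hEdef : E = Matrix.of fun p b => if p.2 = b then (1 : ℝ) else 0)
    (hMγdef : Mγ = M * ((1 + γ) • Z - γ • (Z * (E * Eᵀ) * Z)))
    (hSdef : S = A * Mγ⁻¹ * A + (1 / β) • (Z * E * Ms * Eᵀ * Z))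
    (hSLRdef : SLR = (A + (1 / Real.sqrt β) • (Z * E * Ms * Eᵀ * Z)) * Mγ⁻¹ *
        (A + (1 / Real.sqrt β) • (Z * E * Ms * Eᵀ * Z))) :
    (∀ v : Fin N × Fin n → ℝ,
      (Eᵀ * Z) *ᵥ v = 0 → (Eᵀ * A) *ᵥ v = 0 → S *ᵥ v = SLR *ᵥ v) ∧
    (N - 2) * n ≤ Module.finrank ℝ (LinearMap.ker (SLR⁻¹ * S - 1).mulVecLin) := by
  set Zi : Matrix (Fin N × Fin n) (Fin N × Fin n) ℝ :=
    Matrix.diagonal fun p => (ζ p.1)⁻¹ with hZidef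
  set Mi : Matrix (Fin N × Fin n) (Fin N × Fin n) ℝ :=
    Matrix.of fun p q => if p.1 = q.1 then Ms⁻¹ p.2 q.2 else 0 with hMidef
  set L : Matrix (Fin N × Fin n) (Fin N × Fin n) ℝ := Z * E * Ms * Eᵀ * Z with hLdef
  have hMsdet : IsUnit Ms.det := isUnit_iff_ne_zero.mpr hMs.det_pos.ne'
  have hMsMs : Ms * Ms⁻¹ = 1 := Matrix.mul_nonsing_inv _ hMsdet
  -- primitive identities
  have h1 : Z * Zi = 1 := by
    rw [hZdef, hZidef, diagonal_mul_diagonal]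
    convert diagonal_one
    exact mul_inv_cancel₀ (hζ _).ne'
  have h2 : M * Mi = 1 := by
    rw [hMdef, hMidef]
    ext ⟨i, a⟩ ⟨j, b⟩
    have := congrFun (congrFun hMsMs a) b
    simp only [mul_apply, of_apply, Fintype.sum_prod_type, ite_mul, mul_ite, zero_mul, mul_zero,
      Finset.sum_ite_eq, Finset.mem_univ, if_true, one_apply] at this ⊢
    rcases eq_or_ne i j with rfl | hij
    · simpa using this
    · simp [hij]
  have h3 : Eᵀ * (Z * E) = 1 := by
    rw [hZdef, hEdef]
    ext a b
    simp only [mul_apply, transpose_apply, of_apply, diagonal_apply, Fintype.sum_prod_type,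
      ite_mul, mul_ite, zero_mul, mul_zero, one_mul, mul_one, one_apply]
    rcases eq_or_ne a b with rfl | hab
    · simp [Finset.sum_ite_eq, hsum]
    · simp [hab]
  have h4 : Eᵀ * Mi = Ms⁻¹ * Eᵀ := by
    rw [hEdef, hMidef]
    ext a ⟨j, b⟩
    simp [mul_apply, transpose_apply, of_apply, Fintype.sum_prod_type,
      ite_mul, mul_ite, zero_mul, mul_zero, one_mul, mul_one, Finset.sum_ite_eq,
      Finset.sum_ite_eq', eq_comm]
  set Miγ : Matrix (Fin N × Fin n) (Fin N × Fin n) ℝ :=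
    (1+γ)⁻¹ • (Zi * Mi) + (γ/(1+γ)) • (E * (Eᵀ * Mi)) with hMiγdef
  have hMγ : Mγ * Miγ = 1 := by
    rw [hMγdef, hMiγdef]
    exact SLR_mul_inv_aux Z Zi M Mi E γ hγ h1 h2 h3
  have hMγinv : Mγ⁻¹ = Miγ := Matrix.inv_eq_right_inv hMγ
  have hLMγ : L * Mγ⁻¹ = Z * (E * Eᵀ) := by
    rw [hMγinv, hLdef, hMiγdef]
    exact SLR_low_rank_aux Z Zi Mi E Ms Ms⁻¹ γ hγ h1 h3 h4 hMsMs
  -- Part 1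
  have hmain : ∀ v : Fin N × Fin n → ℝ,
      (Eᵀ * Z) *ᵥ v = 0 → (Eᵀ * A) *ᵥ v = 0 → S *ᵥ v = SLR *ᵥ v := by
    intro v h1v h2v
    have hLv : L *ᵥ v = 0 := by
      have e : L = (Z * E * Ms) * (Eᵀ * Z) := by
        rw [hLdef]; simp only [Matrix.mul_assoc]
      rw [e, ← Matrix.mulVec_mulVec, h1v, Matrix.mulVec_zero]
    have hAv : (Z * (E * Eᵀ) * A) *ᵥ v = 0 := by
      have e : Z * (E * Eᵀ) * A = (Z * E) * (Eᵀ * A) := by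
        simp only [Matrix.mul_assoc]
      rw [e, ← Matrix.mulVec_mulVec, h2v, Matrix.mulVec_zero]
    have hSv : S *ᵥ v = (A * Mγ⁻¹ * A) *ᵥ v := by
      rw [hSdef, Matrix.add_mulVec, Matrix.smul_mulVec, hLv, smul_zero, add_zero]
    have hSLRv : SLR *ᵥ v = (A * Mγ⁻¹ * A) *ᵥ v := by
      rw [hSLRdef, ← Matrix.mulVec_mulVec, Matrix.add_mulVec,
        Matrix.smul_mulVec, hLv, smul_zero, add_zero, Matrix.mulVec_mulVec]
      have e : (A + (1 / Real.sqrt β) • L) * Mγ⁻¹ * A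
          = A * Mγ⁻¹ * A + (1 / Real.sqrt β) • (Z * (E * Eᵀ) * A) := by
        rw [Matrix.add_mul, Matrix.add_mul, Matrix.smul_mul, Matrix.smul_mul, hLMγ]
      rw [e, Matrix.add_mulVec, Matrix.smul_mulVec, hAv, smul_zero, add_zero]
    rw [hSv, hSLRv]
  refine ⟨hmain, ?_⟩
  -- Part 2: invertibility of SLR
  have hApd : A.PosDef := hAdef ▸ SLR_posdef_blk_aux ζ hζ Ablk hA
  have hcnn : (0:ℝ) ≤ 1 / Real.sqrt β := by positivity
  have hLpsd : L.PosSemidef := by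
    have hZt : Zᴴ = Z := by
      rw [hZdef, diagonal_conjTranspose]
      simp [Pi.star_def]
    have hEt : Eᴴ = Eᵀ := by
      ext i j
      simp [conjTranspose_apply]
    have hct : (Z * E)ᴴ = Eᵀ * Z := by
      rw [conjTranspose_mul, hZt, hEt]
    have e : L = (Z * E) * Ms * (Z * E)ᴴ := by
      rw [hct, hLdef]; simp only [Matrix.mul_assoc]
    rw [e]
    exact hMs.posSemidef.mul_mul_conjTranspose_same (Z * E)
  have hcLpsd : ((1 / Real.sqrt β) • L).PosSemidef := by
    refine posSemidef_iff_dotProduct_mulVec.mpr ⟨?_, ?_⟩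
    · show _ = _
      rw [conjTranspose_smul, star_trivial, hLpsd.isHermitian.eq]
    · intro x
      rw [Matrix.smul_mulVec, dotProduct_smul, smul_eq_mul]
      exact mul_nonneg hcnn (hLpsd.dotProduct_mulVec_nonneg x)
  have hBpd : (A + (1 / Real.sqrt β) • L).PosDef := hApd.add_posSemidef hcLpsd
  have hdetB : IsUnit (A + (1 / Real.sqrt β) • L).det := isUnit_iff_ne_zero.mpr hBpd.det_pos.ne'
  have hdetMγ : IsUnit Mγ.det := Matrix.isUnit_det_of_right_inverse hMγ
  have hdetSLR : IsUnit SLR.det := by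
    rw [hSLRdef]
    simp only [det_mul]
    exact (hdetB.mul (Matrix.isUnit_nonsing_inv_det _ hdetMγ)).mul hdetB
  have hinv : SLR⁻¹ * SLR = 1 := Matrix.nonsing_inv_mul _ hdetSLR
  -- linear algebra
  set f : (Fin N × Fin n → ℝ) →ₗ[ℝ] (Fin n → ℝ) := (Eᵀ * Z).mulVecLin with hf
  set g : (Fin N × Fin n → ℝ) →ₗ[ℝ] (Fin n → ℝ) := (Eᵀ * A).mulVecLin with hg
  have hle : LinearMap.ker f ⊓ LinearMap.ker g ≤
      LinearMap.ker (SLR⁻¹ * S - 1).mulVecLin := by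
    intro v hv
    rw [Submodule.mem_inf, LinearMap.mem_ker, LinearMap.mem_ker, hf, hg,
      Matrix.mulVecLin_apply, Matrix.mulVecLin_apply] at hv
    rw [LinearMap.mem_ker, Matrix.mulVecLin_apply, Matrix.sub_mulVec, Matrix.one_mulVec,
      ← Matrix.mulVec_mulVec, hmain v hv.1 hv.2, Matrix.mulVec_mulVec, hinv,
      Matrix.one_mulVec, sub_self]
  have hkerprod : LinearMap.ker f ⊓ LinearMap.ker g = LinearMap.ker (f.prod g) :=
    (LinearMap.ker_prod f g).symm
  have hrn := (f.prod g).finrank_range_add_finrank_ker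
  have hdom : Module.finrank ℝ (Fin N × Fin n → ℝ) = N * n := by
    simp [Module.finrank_pi]
  rw [hdom] at hrn
  have hrange : Module.finrank ℝ (LinearMap.range (f.prod g)) ≤ n + n := by
    have h := Submodule.finrank_le (LinearMap.range (f.prod g))
    simpa [Module.finrank_prod, Module.finrank_pi] using h
  have h2n : (N - 2) * n + (n + n) = N * n := by
    have e : (N - 2) * n + (n + n) = ((N - 2) + 2) * n := by ring
    rw [e, Nat.sub_add_cancel hN]
  have key : (N - 2) * n ≤ Module.finrank ℝ ↥(LinearMap.ker (f.prod g)) := by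
    have : (N - 2) * n + (n + n) ≤ Module.finrank ℝ ↥(LinearMap.ker (f.prod g)) + (n + n) := by
      calc (N - 2) * n + (n + n) = N * n := h2n
        _ = Module.finrank ℝ ↥(LinearMap.range (f.prod g)) +
            Module.finrank ℝ ↥(LinearMap.ker (f.prod g)) := hrn.symm
        _ ≤ (n + n) + Module.finrank ℝ ↥(LinearMap.ker (f.prod g)) :=
            Nat.add_le_add_right hrange _
        _ = Module.finrank ℝ ↥(LinearMap.ker (f.prod g)) + (n + n) := Nat.add_comm _ _
    exact Nat.le_of_add_le_add_right this
  calc (N - 2) * n ≤ Module.finrank ℝ ↥(LinearMap.ker (f.prod g)) := key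
    _ = Module.finrank ℝ ↥(LinearMap.ker f ⊓ LinearMap.ker g) := by rw [hkerprod]
    _ ≤ Module.finrank ℝ ↥(LinearMap.ker (SLR⁻¹ * S - 1).mulVecLin) :=
        Submodule.finrank_mono hle

/-- Vectors in `ℋ ∩ 𝒦` satisfy `S v = S_LR v`; hence `1` is an eigenvalue of
`S_LR⁻¹ S` with geometric multiplicity at least `(N−2)n`. -/
theorem SLR_matching {N n : ℕ} (hN : 2 ≤ N)
    (ζ : Fin N → ℝ) (hζ : ∀ j, 0 < ζ j) (hsum : ∑ j, ζ j = 1)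
    (Ablk : Fin N → Matrix (Fin n) (Fin n) ℝ) (hA : ∀ j, (Ablk j).PosDef)
    (Ms : Matrix (Fin n) (Fin n) ℝ) (hMs : Ms.PosDef)
    (β γ : ℝ) (hβ : 0 < β) (hγ : 0 ≤ γ) :
    let A : Matrix (Fin N × Fin n) (Fin N × Fin n) ℝ :=
      Matrix.of fun p q => if p.1 = q.1 then ζ p.1 * Ablk p.1 p.2 q.2 else 0
    let Z : Matrix (Fin N × Fin n) (Fin N × Fin n) ℝ := Matrix.diagonal fun p => ζ p.1
    let M : Matrix (Fin N × Fin n) (Fin N × Fin n) ℝ :=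
      Matrix.of fun p q => if p.1 = q.1 then Ms p.2 q.2 else 0
    let E : Matrix (Fin N × Fin n) (Fin n) ℝ :=
      Matrix.of fun p b => if p.2 = b then (1 : ℝ) else 0
    let Mγ : Matrix (Fin N × Fin n) (Fin N × Fin n) ℝ :=
      M * ((1 + γ) • Z - γ • (Z * (E * Eᵀ) * Z))
    let S : Matrix (Fin N × Fin n) (Fin N × Fin n) ℝ :=
      A * Mγ⁻¹ * A + (1 / β) • (Z * E * Ms * Eᵀ * Z)
    let SLR : Matrix (Fin N × Fin n) (Fin N × Fin n) ℝ :=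
      (A + (1 / Real.sqrt β) • (Z * E * Ms * Eᵀ * Z)) * Mγ⁻¹ *
        (A + (1 / Real.sqrt β) • (Z * E * Ms * Eᵀ * Z))
    (∀ v : Fin N × Fin n → ℝ,
      (Eᵀ * Z) *ᵥ v = 0 → (Eᵀ * A) *ᵥ v = 0 → S *ᵥ v = SLR *ᵥ v) ∧
    (N - 2) * n ≤ Module.finrank ℝ (LinearMap.ker (SLR⁻¹ * S - 1).mulVecLin) := by
  intro A Z M E Mγ S SLR
  exact SLR_matching_aux hN ζ hζ hsum Ablk hA Ms hMs β γ hβ hγ A Z M Mγ S SLR E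
    rfl rfl rfl rfl rfl rfl rfl
end
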